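/- Let F be a finite tree and let u, v, w be vertices such that u is adjacent to v and v is adjacent to w (with u ≠ w). Then v cannot have strictly maximal free multiplicity among the three nodes; that is, μ_F(v) ≤ μ_F(u) or μ_F(v) ≤ μ_F(w). -/

import Mathlib

/-- The automorphism group of a simple graph, as a subgroup of the
permutation group of the vertex set. -/
def graphAut {V : Type*} (G : SimpleGraph V) : Subgroup (Equiv.Perm V) where
  carrier := {f | ∀ u v, G.Adj (f u) (f v) ↔ G.Adj u v}
  one_mem' := by intro u v; simp
  mul_mem' := by
    intro a b ha hb u v
    simp only [Set.mem_setOf_eq] at *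
    rw [Equiv.Perm.mul_apply, Equiv.Perm.mul_apply, ha, hb]
  inv_mem' := by
    intro a ha u v
    simpa using (ha (a⁻¹ u) (a⁻¹ v)).symm

/-- The free multiplicity of a vertex: the size of its orbit under the
automorphism group of the graph. -/
noncomputable def freeMult {V : Type*} (G : SimpleGraph V) (u : V) : ℕ :=
  Nat.card (MulAction.orbit (graphAut G) u)

open SimpleGraph Finset

section Aux

variable {V : Type*} {G : SimpleGraph V}

/-- If `x` is in the support of a walk to `y`, then `dist x y ≤` the walk's length. -/
private lemma dist_le_of_mem_support {z y x : V} (p : G.Walk z y) (hx : x ∈ p.support) :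
    G.dist x y ≤ p.length := by
  classical
  exact (SimpleGraph.dist_le (p.dropUntil x hx)).trans (SimpleGraph.Walk.length_dropUntil_le p hx)

/-- If moreover the walk doesn't start at `x`, then `dist x y + 1 ≤` the length. -/
private lemma dist_add_one_le_of_mem_support {z y x : V} (p : G.Walk z y)
    (hx : x ∈ p.support) (hzx : z ≠ x) : G.dist x y + 1 ≤ p.length := by
  classical
  have hspec := p.take_spec hx
  have hlen : (p.takeUntil x hx).length + (p.dropUntil x hx).length = p.length := by
    rw [← SimpleGraph.Walk.length_append, hspec]
  have h1 : 1 ≤ (p.takeUntil x hx).length := by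
    by_contra h
    exact hzx (SimpleGraph.Walk.eq_of_length_eq_zero (p := p.takeUntil x hx) (by omega))
  have h2 : G.dist x y ≤ (p.dropUntil x hx).length := SimpleGraph.dist_le _
  omega

/-- In a tree, the distance to a fixed vertex changes by exactly one along an edge. -/
private lemma tree_dist_adj (hconn : G.Connected) (hacyc : G.IsAcyclic) {x z : V}
    (hxz : G.Adj x z) (y : V) :
    G.dist z y = G.dist x y + 1 ∨ G.dist z y + 1 = G.dist x y := by
  classical
  obtain ⟨P, hP, hPl⟩ := hconn.exists_path_of_dist x y
  by_cases hz : z ∈ P.support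
  · right
    have hle : G.dist z y + 1 ≤ P.length := dist_add_one_le_of_mem_support P hz hxz.ne
    have hge : G.dist x y ≤ 1 + G.dist z y := by
      calc G.dist x y ≤ G.dist x z + G.dist z y := hconn.dist_triangle
        _ ≤ 1 + G.dist z y := by
            have : G.dist x z ≤ 1 := (SimpleGraph.dist_le hxz.toWalk)
            omega
    omega
  · left
    have hQ : (SimpleGraph.Walk.cons hxz.symm P).IsPath := hP.cons hz
    have hle : G.dist z y ≤ G.dist x y + 1 := by
      have := SimpleGraph.dist_le (SimpleGraph.Walk.cons hxz.symm P)
      simpa [hPl] using this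
    have hge : ¬ G.dist z y ≤ G.dist x y := by
      intro hle'
      obtain ⟨R, hR, hRl⟩ := (hconn z y).exists_path_of_dist
      have hxR : x ∉ R.support := by
        intro hxmem
        have := dist_add_one_le_of_mem_support R hxmem hxz.ne.symm
        omega
      have hS : (SimpleGraph.Walk.cons hxz R).IsPath := hR.cons hxR
      have heq : P = SimpleGraph.Walk.cons hxz R := by
        have := (SimpleGraph.isAcyclic_iff_path_unique.mp hacyc)
          ⟨P, hP⟩ ⟨SimpleGraph.Walk.cons hxz R, hS⟩
        exact Subtype.ext_iff.mp this
      apply hz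
      rw [heq, SimpleGraph.Walk.support_cons]
      exact List.mem_cons_of_mem _ R.start_mem_support
    omega

/-- In a tree, the neighbor of `x` that is closer to `y` is unique. -/
private lemma tree_closer_unique (hconn : G.Connected) (hacyc : G.IsAcyclic)
    {x z₁ z₂ y : V} (h₁ : G.Adj x z₁) (h₂ : G.Adj x z₂)
    (d₁ : G.dist z₁ y < G.dist x y) (d₂ : G.dist z₂ y < G.dist x y) : z₁ = z₂ := by
  classical
  have e₁ : G.dist z₁ y + 1 = G.dist x y := by
    rcases tree_dist_adj hconn hacyc h₁ y with h | h <;> omega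
  have e₂ : G.dist z₂ y + 1 = G.dist x y := by
    rcases tree_dist_adj hconn hacyc h₂ y with h | h <;> omega
  obtain ⟨R₁, hR₁, hR₁l⟩ := (hconn z₁ y).exists_path_of_dist
  obtain ⟨R₂, hR₂, hR₂l⟩ := (hconn z₂ y).exists_path_of_dist
  have hxR₁ : x ∉ R₁.support := by
    intro hxmem
    have := dist_add_one_le_of_mem_support R₁ hxmem h₁.ne'
    omega
  have hxR₂ : x ∉ R₂.support := by
    intro hxmem
    have := dist_add_one_le_of_mem_support R₂ hxmem h₂.ne'
    omega
  have hS₁ : (SimpleGraph.Walk.cons h₁ R₁).IsPath := hR₁.cons hxR₁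
  have hS₂ : (SimpleGraph.Walk.cons h₂ R₂).IsPath := hR₂.cons hxR₂
  have heq : (SimpleGraph.Walk.cons h₁ R₁) = (SimpleGraph.Walk.cons h₂ R₂) := by
    have := (SimpleGraph.isAcyclic_iff_path_unique.mp hacyc)
      ⟨SimpleGraph.Walk.cons h₁ R₁, hS₁⟩ ⟨SimpleGraph.Walk.cons h₂ R₂, hS₂⟩
    exact Subtype.ext_iff.mp this
  have := congrArg (fun (W : G.Walk x y) => W.getVert 1) heq
  simpa [SimpleGraph.Walk.getVert_cons_succ] using this

end Aux

/-- The sum of distances from `x` to all vertices. -/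
private noncomputable def sDist {V : Type*} [Fintype V] (G : SimpleGraph V) (x : V) : ℕ :=
  ∑ y, G.dist x y

section Aux2

variable {V : Type*} [Fintype V] {G : SimpleGraph V}

open Classical in
/-- The fundamental balance equation along an edge of a tree. -/
private lemma sDist_adj_key (hconn : G.Connected) (hacyc : G.IsAcyclic) {x z : V}
    (hxz : G.Adj x z) :
    sDist G z + (Finset.univ.filter (fun y => G.dist z y < G.dist x y)).card
      = sDist G x + (Finset.univ.filter (fun y => G.dist x y < G.dist z y)).card := by
  classical
  have key : ∀ y : V,
      G.dist z y + (if G.dist z y < G.dist x y then 1 else 0)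
        = G.dist x y + (if G.dist x y < G.dist z y then 1 else 0) := by
    intro y
    rcases tree_dist_adj hconn hacyc hxz y with h | h
    · rw [if_neg (by omega), if_pos (by omega)]; omega
    · rw [if_pos (by omega), if_neg (by omega)]; omega
  have := Finset.sum_congr rfl (fun y (_ : y ∈ Finset.univ) => key y)
  rw [Finset.sum_add_distrib, Finset.sum_add_distrib] at this
  simpa [sDist, Finset.sum_boole] using this

open Classical in
/-- In a finite tree, each vertex has at most one neighbor with smaller distance-sum. -/
private lemma sDist_smaller_neighbor_unique (hconn : G.Connected) (hacyc : G.IsAcyclic)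
    {x z₁ z₂ : V} (h₁ : G.Adj x z₁) (h₂ : G.Adj x z₂)
    (s₁ : sDist G z₁ < sDist G x) (s₂ : sDist G z₂ < sDist G x) : z₁ = z₂ := by
  classical
  by_contra hne
  have k₁ := sDist_adj_key hconn hacyc h₁
  have k₂ := sDist_adj_key hconn hacyc h₂
  have hsub₁ : (Finset.univ.filter (fun y => G.dist z₁ y < G.dist x y))
      ⊆ (Finset.univ.filter (fun y => G.dist x y < G.dist z₂ y)) := by
    intro y hy
    simp only [Finset.mem_filter, Finset.mem_univ, true_and] at hy ⊢
    rcases tree_dist_adj hconn hacyc h₂ y with h | h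
    · omega
    · exact absurd (tree_closer_unique hconn hacyc h₁ h₂ hy (by omega)) hne
  have hsub₂ : (Finset.univ.filter (fun y => G.dist z₂ y < G.dist x y))
      ⊆ (Finset.univ.filter (fun y => G.dist x y < G.dist z₁ y)) := by
    intro y hy
    simp only [Finset.mem_filter, Finset.mem_univ, true_and] at hy ⊢
    rcases tree_dist_adj hconn hacyc h₁ y with h | h
    · omega
    · exact absurd (tree_closer_unique hconn hacyc h₂ h₁ hy (by omega)) (Ne.symm hne)
  have c₁ := Finset.card_le_card hsub₁
  have c₂ := Finset.card_le_card hsub₂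
  omega

private lemma aut_dist_le (hconn : G.Connected) {f : Equiv.Perm V} (hf : f ∈ graphAut G)
    (x y : V) : G.dist (f x) (f y) ≤ G.dist x y := by
  obtain ⟨p, hp⟩ := hconn.exists_walk_length_eq_dist x y
  let hom : G →g G := ⟨f, fun h => (hf _ _).mpr h⟩
  calc G.dist (f x) (f y) ≤ (p.map hom).length := by exact SimpleGraph.dist_le (p.map hom)
    _ = p.length := SimpleGraph.Walk.length_map hom p
    _ = G.dist x y := hp

private lemma aut_dist (hconn : G.Connected) {f : Equiv.Perm V} (hf : f ∈ graphAut G)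
    (x y : V) : G.dist (f x) (f y) = G.dist x y := by
  refine le_antisymm (aut_dist_le hconn hf x y) ?_
  have := aut_dist_le hconn ((graphAut G).inv_mem hf) (f x) (f y)
  simpa using this

private lemma aut_sDist (hconn : G.Connected) {f : Equiv.Perm V} (hf : f ∈ graphAut G)
    (x : V) : sDist G (f x) = sDist G x := by
  unfold sDist
  rw [← Equiv.sum_comp f (fun y => G.dist (f x) y)]
  exact Finset.sum_congr rfl fun y _ => aut_dist hconn hf x y

/-- The key orbit-counting step: if `v` is the smaller-`sDist` endpoint of an edge `u-v`,
then the orbit of `v` is no bigger than the orbit of `u`. -/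
private lemma freeMult_le_of_sDist_lt (hconn : G.Connected) (hacyc : G.IsAcyclic)
    {u v : V} (huv : G.Adj u v) (hs : sDist G v < sDist G u) :
    freeMult G v ≤ freeMult G u := by
  classical
  set H := graphAut G
  have hmem : ∀ x : MulAction.orbit H u, ∃ g : H, g • u = (x : V) := fun x =>
    MulAction.mem_orbit_iff.mp x.2
  choose g hg using hmem
  let F : MulAction.orbit H u → MulAction.orbit H v := fun x =>
    ⟨(g x : Equiv.Perm V) v, MulAction.mem_orbit v (g x)⟩
  have hsurj : Function.Surjective F := by
    rintro ⟨y, hy⟩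
    obtain ⟨h, hh⟩ := MulAction.mem_orbit_iff.mp hy
    refine ⟨⟨h • u, MulAction.mem_orbit u h⟩, ?_⟩
    set x : MulAction.orbit H u := ⟨h • u, MulAction.mem_orbit u h⟩
    have hgx : (g x : Equiv.Perm V) u = (h : Equiv.Perm V) u := hg x
    have hgaut : (g x : Equiv.Perm V) ∈ graphAut G := (g x).2
    have hhaut : (h : Equiv.Perm V) ∈ graphAut G := h.2
    have hadj₁ : G.Adj ((h : Equiv.Perm V) u) ((g x : Equiv.Perm V) v) := by
      rw [← hgx]
      exact (hgaut u v).mpr huv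
    have hadj₂ : G.Adj ((h : Equiv.Perm V) u) ((h : Equiv.Perm V) v) :=
      (hhaut u v).mpr huv
    have hs₁ : sDist G ((g x : Equiv.Perm V) v) < sDist G ((h : Equiv.Perm V) u) := by
      rw [aut_sDist hconn hgaut, aut_sDist hconn hhaut]
      exact hs
    have hs₂ : sDist G ((h : Equiv.Perm V) v) < sDist G ((h : Equiv.Perm V) u) := by
      rw [aut_sDist hconn hhaut, aut_sDist hconn hhaut]
      exact hs
    have : (g x : Equiv.Perm V) v = (h : Equiv.Perm V) v :=
      sDist_smaller_neighbor_unique hconn hacyc hadj₁ hadj₂ hs₁ hs₂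
    exact Subtype.ext (this.trans hh)
  exact Nat.card_le_card_of_surjective F hsurj

end Aux2

/-- in a finite tree, for a path `u - v - w` (with `u ≠ w`),
the middle vertex `v` cannot have strictly maximal free multiplicity:
`μ_F(v) ≤ μ_F(u)` or `μ_F(v) ≤ μ_F(w)`. -/
theorem freeMult_middle_not_strict_max {V : Type*} [Fintype V] (G : SimpleGraph V)
    (hconn : G.Connected) (hacyc : G.IsAcyclic) {u v w : V}
    (huv : G.Adj u v) (hvw : G.Adj v w) (huw : u ≠ w) :
    freeMult G v ≤ freeMult G u ∨ freeMult G v ≤ freeMult G w := by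
  classical
  have key : sDist G v < sDist G u ∨ sDist G v < sDist G w := by
    by_contra hcon
    push_neg at hcon
    obtain ⟨h₁, h₂⟩ := hcon
    have hpt : ∀ y : V, 2 * G.dist v y ≤ G.dist u y + G.dist w y := by
      intro y
      rcases tree_dist_adj hconn hacyc huv.symm y with hu | hu <;>
        rcases tree_dist_adj hconn hacyc hvw y with hw | hw
      · omega
      · omega
      · omega
      · exact absurd (tree_closer_unique hconn hacyc (y := y) huv.symm hvw
          (by omega) (by omega)) huw
    have hstrict : 2 * G.dist v v < G.dist u v + G.dist w v := by
      have h1 : 0 < G.dist u v := hconn.pos_dist_of_ne huv.ne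
      have h2 : G.dist v v = 0 := SimpleGraph.dist_self
      omega
    have hsum : 2 * sDist G v < sDist G u + sDist G w := by
      have := Finset.sum_lt_sum (f := fun y => 2 * G.dist v y)
        (g := fun y => G.dist u y + G.dist w y)
        (fun y (_ : y ∈ Finset.univ) => hpt y)
        ⟨v, Finset.mem_univ v, hstrict⟩
      simpa [sDist, Finset.mul_sum, Finset.sum_add_distrib] using this
    omega
  rcases key with h | h
  · exact Or.inl (freeMult_le_of_sDist_lt hconn hacyc huv h)
  · exact Or.inr (freeMult_le_of_sDist_lt hconn hacyc hvw.symm h)
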